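/- With I_p = {α^p_1, ..., α^p_{t_p}} a part of a directed partition where α^p_u = α_{j_1} + ... + α_{j_u}, and σ the permutation of {1,...,t_p} with j_{σ(u)} = i^p_u (the letters i^p_1 < ... < i^p_{t_p} being the support of I_p in increasing order), the components of D restricted to this part satisfy a^p_u = c_{α^p_{σ(u)}} + c_{α^p_{σ(u)+1}} + ... + c_{α^p_{t_p}}, and hence c_{α^p_u} = a^p_{σ^{-1}(u)} − a^p_{σ^{-1}(u+1)} for u ≠ t_p and c_{α^p_{t_p}} = a^p_{σ^{-1}(t_p)}. -/
import Mathlib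


attribute [local instance] Classical.propDecidable

/-- Within one part `I_p = {α^p_1, ..., α^p_t}` of a directed partition, where
`α^p_u = α_{J 1} + ... + α_{J u}` (so `J` lists the simple roots added one at a time) and
`σ` is the permutation with `i^p_u = J (σ u)` (the letters of the support in increasing
order), the components of the function `D` satisfy
`a^p_u = c_{α^p_{σ u}} + c_{α^p_{σ u + 1}} + ... + c_{α^p_t}`, and hence
`c_{α^p_u} = a^p_{σ⁻¹ u} - a^p_{σ⁻¹ (u+1)}` for `u ≠ t` and `c_{α^p_t} = a^p_{σ⁻¹ t}`. -/
theorem D_components_on_part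
    (t : ℕ) (ht : 1 ≤ t) (J : Fin t → ℕ) (hJ : Function.Injective J)
    (σ : Equiv.Perm (Fin t)) (hσ : StrictMono (fun u => J (σ u)))
    (c a : Fin t → ℤ)
    (ha : ∀ u, a u =
      ∑ v ∈ Finset.univ.filter (fun v => ∃ w, w ≤ v ∧ J w = J (σ u)), c v) :
    (∀ u, a u = ∑ v ∈ Finset.univ.filter (fun v => σ u ≤ v), c v) ∧
    (∀ (u : Fin t) (h : (u : ℕ) + 1 < t),
      c u = a (σ⁻¹ u) - a (σ⁻¹ ⟨(u : ℕ) + 1, h⟩)) ∧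
    (∀ u : Fin t, (u : ℕ) + 1 = t → c u = a (σ⁻¹ u)) := by
  have key : ∀ u, a u = ∑ v ∈ Finset.univ.filter (fun v => σ u ≤ v), c v := by
    intro u
    rw [ha u]
    congr 1
    apply Finset.filter_congr
    intro v _
    constructor
    · rintro ⟨w, hw, hJw⟩
      exact (hJ hJw) ▸ hw
    · intro h
      exact ⟨σ u, h, rfl⟩
  refine ⟨key, ?_, ?_⟩
  · intro u h
    have h1 : a (σ⁻¹ u) = ∑ v ∈ Finset.univ.filter (fun v => u ≤ v), c v := by
      rw [key]; simp
    have h2 : a (σ⁻¹ ⟨(u : ℕ) + 1, h⟩) =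
        ∑ v ∈ Finset.univ.filter (fun v => (⟨(u : ℕ) + 1, h⟩ : Fin t) ≤ v), c v := by
      rw [key]; simp
    rw [h1, h2]
    have hsplit : Finset.univ.filter (fun v => u ≤ v) =
        insert u (Finset.univ.filter (fun v => (⟨(u : ℕ) + 1, h⟩ : Fin t) ≤ v)) := by
      ext v
      simp only [Finset.mem_filter, Finset.mem_univ, true_and, Finset.mem_insert,
        Fin.le_def, Fin.ext_iff]
      omega
    have hu : u ∉ Finset.univ.filter (fun v => (⟨(u : ℕ) + 1, h⟩ : Fin t) ≤ v) := by
      simp [Fin.le_def]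
    rw [hsplit, Finset.sum_insert hu]
    ring
  · intro u hu
    have h1 : a (σ⁻¹ u) = ∑ v ∈ Finset.univ.filter (fun v => u ≤ v), c v := by
      rw [key]; simp
    have hset : Finset.univ.filter (fun v => u ≤ v) = {u} := by
      ext v
      simp only [Finset.mem_filter, Finset.mem_univ, true_and, Finset.mem_singleton,
        Fin.le_def, Fin.ext_iff]
      have := v.isLt
      omega
    rw [h1, hset, Finset.sum_singleton]
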